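/- Let n ≥ 4 and let G be the graph Sₙ⁺ on n vertices obtained from the star Sₙ by adding one edge between two pendant vertices. Then for every integer k with 3 ≤ k ≤ n, the sum of the k largest signless Laplacian eigenvalues of G is strictly less than 1 plus the sum of the k largest vertex degrees of G, i.e., q₁(G) + … + q_k(G) < 1 + d₁(G) + … + d_k(G). -/

import Mathlib

open Matrix

/-- The signless Laplacian matrix `Q(G) = D + A` of a simple graph, over `ℝ`. -/
def sLapMatrix {m : ℕ} (G : SimpleGraph (Fin m)) [DecidableRel G.Adj] :
    Matrix (Fin m) (Fin m) ℝ :=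
  G.degMatrix ℝ + G.adjMatrix ℝ

/-- `q` lists the eigenvalues of `A` (with multiplicity) in non-increasing order. -/
def IsEigSeq {m : ℕ} (A : Matrix (Fin m) (Fin m) ℝ) (q : Fin m → ℝ) : Prop :=
  Antitone q ∧ ∃ (hA : A.IsHermitian) (σ : Equiv.Perm (Fin m)),
    ∀ i, q i = hA.eigenvalues (σ i)

/-- `d` lists the degrees of `G` (with multiplicity) in non-increasing order. -/
def IsDegSeq {m : ℕ} (G : SimpleGraph (Fin m)) [DecidableRel G.Adj] (d : Fin m → ℕ) : Prop :=
  Antitone d ∧ ∃ σ : Equiv.Perm (Fin m), ∀ i, d i = G.degree (σ i)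

/-- `Sₙ⁺`: the star on `n` vertices with center `0`, plus the extra edge `{1, 2}`. -/
def starPlus (n : ℕ) : SimpleGraph (Fin n) where
  Adj a b := a ≠ b ∧ (a.val = 0 ∨ b.val = 0 ∨ (a.val ≤ 2 ∧ b.val ≤ 2))
  symm := by constructor; intro a b h; exact ⟨h.1.symm, by tauto⟩
  loopless := by constructor; intro a h; exact h.1 rfl

instance starPlus.adjDecidable (n : ℕ) : DecidableRel (starPlus n).Adj := fun a b =>
  inferInstanceAs (Decidable (a ≠ b ∧ (a.val = 0 ∨ b.val = 0 ∨ (a.val ≤ 2 ∧ b.val ≤ 2))))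

namespace StarPlusAux

variable {n : ℕ}

lemma adj_iff (a b : Fin n) : (starPlus n).Adj a b ↔
    a ≠ b ∧ (a.val = 0 ∨ b.val = 0 ∨ (a.val ≤ 2 ∧ b.val ≤ 2)) := Iff.rfl

lemma nbhd_zero (j : Fin n) (hj : j.val = 0) :
    (starPlus n).neighborFinset j = Finset.univ.erase j := by
  ext u
  simp only [SimpleGraph.mem_neighborFinset, adj_iff, Finset.mem_erase, Finset.mem_univ,
    and_true]
  constructor
  · rintro ⟨h1, -⟩; exact fun h => h1 (h ▸ rfl)
  · intro h; exact ⟨fun h' => h h'.symm, Or.inl hj⟩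

lemma degree_zero (j : Fin n) (hj : j.val = 0) : (starPlus n).degree j = n - 1 := by
  rw [← SimpleGraph.card_neighborFinset_eq_degree, nbhd_zero j hj,
    Finset.card_erase_of_mem (Finset.mem_univ j), Finset.card_univ, Fintype.card_fin]

lemma nbhd_pendant (j : Fin n) (hj : 3 ≤ j.val) (h0 : 0 < n) :
    (starPlus n).neighborFinset j = {⟨0, h0⟩} := by
  ext u
  simp only [SimpleGraph.mem_neighborFinset, adj_iff, Finset.mem_singleton]
  constructor
  · rintro ⟨h1, h2 | h2 | h2⟩
    · omega
    · exact Fin.ext h2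
    · omega
  · rintro rfl
    exact ⟨fun h => by have := congrArg Fin.val h; simp at this; omega, Or.inr (Or.inl rfl)⟩

lemma degree_pendant (j : Fin n) (hj : 3 ≤ j.val) : (starPlus n).degree j = 1 := by
  have h0 : 0 < n := lt_of_lt_of_le (by omega) (le_of_lt j.isLt)
  rw [← SimpleGraph.card_neighborFinset_eq_degree, nbhd_pendant j hj h0,
    Finset.card_singleton]

lemma nbhd_one (hn : 4 ≤ n) (j : Fin n) (hj : j.val = 1) :
    (starPlus n).neighborFinset j = {⟨0, by omega⟩, ⟨2, by omega⟩} := by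
  ext u
  simp only [SimpleGraph.mem_neighborFinset, adj_iff, Finset.mem_insert, Finset.mem_singleton,
    ne_eq, Fin.ext_iff, Fin.val_mk]
  omega

lemma degree_one (hn : 4 ≤ n) (j : Fin n) (hj : j.val = 1) : (starPlus n).degree j = 2 := by
  rw [← SimpleGraph.card_neighborFinset_eq_degree, nbhd_one hn j hj]
  rw [Finset.card_insert_of_notMem (by simp [Fin.ext_iff]), Finset.card_singleton]

lemma nbhd_two (hn : 4 ≤ n) (j : Fin n) (hj : j.val = 2) :
    (starPlus n).neighborFinset j = {⟨0, by omega⟩, ⟨1, by omega⟩} := by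
  ext u
  simp only [SimpleGraph.mem_neighborFinset, adj_iff, Finset.mem_insert, Finset.mem_singleton,
    ne_eq, Fin.ext_iff, Fin.val_mk]
  omega

lemma degree_two (hn : 4 ≤ n) (j : Fin n) (hj : j.val = 2) : (starPlus n).degree j = 2 := by
  rw [← SimpleGraph.card_neighborFinset_eq_degree, nbhd_two hn j hj]
  rw [Finset.card_insert_of_notMem (by simp [Fin.ext_iff]), Finset.card_singleton]

lemma degree_pos (hn : 4 ≤ n) (j : Fin n) : 1 ≤ (starPlus n).degree j := by
  rcases le_or_gt 3 j.val with h | h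
  · rw [degree_pendant j h]
  · interval_cases h' : j.val
    · rw [degree_zero j h']; omega
    · rw [degree_one hn j h']; omega
    · rw [degree_two hn j h']; omega

lemma degree_le_one_of_ge (hn : 4 ≤ n) (j : Fin n) (hj : 2 ≤ (starPlus n).degree j) :
    j.val < 3 := by
  by_contra h
  rw [degree_pendant j (by omega)] at hj
  omega

end StarPlusAux

namespace StarPlusAux
variable {n : ℕ}

lemma filter_lt_three (hn : 4 ≤ n) : Finset.univ.filter (fun i : Fin n => i.val < 3) =
    {⟨0, by omega⟩, ⟨1, by omega⟩, ⟨2, by omega⟩} := by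
  ext u
  simp only [Finset.mem_filter, Finset.mem_univ, true_and, Finset.mem_insert,
    Finset.mem_singleton, Fin.ext_iff, Fin.val_mk]
  omega

lemma card_pendants (hn : 4 ≤ n) :
    (Finset.univ.filter (fun i : Fin n => 3 ≤ i.val)).card = n - 3 := by
  have h := Finset.card_filter_add_card_filter_not (s := (Finset.univ : Finset (Fin n)))
    (p := fun i : Fin n => i.val < 3)
  rw [Finset.card_univ, Fintype.card_fin, filter_lt_three hn] at h
  have hc : ({⟨0, by omega⟩, ⟨1, by omega⟩, ⟨2, by omega⟩} : Finset (Fin n)).card = 3 := by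
    rw [Finset.card_insert_of_notMem (by simp [Fin.ext_iff]),
      Finset.card_insert_of_notMem (by simp [Fin.ext_iff]), Finset.card_singleton]
  have he : (Finset.univ.filter (fun i : Fin n => ¬ i.val < 3)) =
      (Finset.univ.filter (fun i : Fin n => 3 ≤ i.val)) := by
    apply Finset.filter_congr; intro x _; simp
  rw [he] at h
  omega

lemma sum_univ_split (hn : 4 ≤ n) (f : Fin n → ℝ) :
    ∑ u, f u = f ⟨0, by omega⟩ + f ⟨1, by omega⟩ + f ⟨2, by omega⟩ +
      ∑ u ∈ Finset.univ.filter (fun i : Fin n => 3 ≤ i.val), f u := by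
  have h := Finset.sum_filter_add_sum_filter_not (Finset.univ : Finset (Fin n))
    (fun i : Fin n => i.val < 3) f
  rw [filter_lt_three hn] at h
  have he : (Finset.univ.filter (fun i : Fin n => ¬ i.val < 3)) =
      (Finset.univ.filter (fun i : Fin n => 3 ≤ i.val)) := by
    apply Finset.filter_congr; intro x _; simp
  rw [he] at h
  rw [← h]
  rw [Finset.sum_insert (by simp [Fin.ext_iff]), Finset.sum_insert (by simp [Fin.ext_iff]),
    Finset.sum_singleton]
  ring

lemma sum_degrees (hn : 4 ≤ n) : ∑ v : Fin n, (starPlus n).degree v = 2 * n := by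
  have h := Finset.sum_filter_add_sum_filter_not (Finset.univ : Finset (Fin n))
    (fun i : Fin n => i.val < 3) (fun v => (starPlus n).degree v)
  rw [filter_lt_three hn] at h
  have he : (Finset.univ.filter (fun i : Fin n => ¬ i.val < 3)) =
      (Finset.univ.filter (fun i : Fin n => 3 ≤ i.val)) := by
    apply Finset.filter_congr; intro x _; simp
  rw [he] at h
  rw [← h]
  rw [Finset.sum_insert (by simp [Fin.ext_iff]), Finset.sum_insert (by simp [Fin.ext_iff]),
    Finset.sum_singleton]
  rw [degree_zero _ rfl, degree_one hn _ rfl, degree_two hn _ rfl]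
  rw [Finset.sum_congr rfl (fun x hx => degree_pendant x (Finset.mem_filter.mp hx).2)]
  rw [Finset.sum_const, card_pendants hn, smul_eq_mul, mul_one]
  omega

end StarPlusAux

namespace StarPlusAux
variable {n : ℕ}

lemma sLap_mulVec (v : Fin n → ℝ) (j : Fin n) :
    (sLapMatrix (starPlus n) *ᵥ v) j =
      (starPlus n).degree j * v j + ∑ u ∈ (starPlus n).neighborFinset j, v u := by
  rw [sLapMatrix, add_mulVec, Pi.add_apply, SimpleGraph.degMatrix_mulVec_apply,
    SimpleGraph.adjMatrix_mulVec_apply]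

/-- the cubic whose roots are the non-1 eigenvalues -/
noncomputable def gcube (n : ℕ) (x : ℝ) : ℝ :=
  -x^3 + ((n : ℝ) + 3) * x^2 - 3 * (n : ℝ) * x + 4

/-- eigenvector pattern for eigenvalue lam ≠ 1 -/
noncomputable def pat (lam : ℝ) (u : Fin n) : ℝ :=
  if u.val = 0 then (lam - 3) * (lam - 1) else if u.val ≤ 2 then lam - 1 else lam - 3

lemma eig_main (hn : 4 ≤ n) (lam : ℝ) (v : Fin n → ℝ) (hv : v ≠ 0)
    (heig : sLapMatrix (starPlus n) *ᵥ v = lam • v) :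
    lam = 1 ∨ (gcube n lam = 0 ∧ lam ≠ 1 ∧ lam ≠ 3 ∧ v ⟨0, by omega⟩ ≠ 0 ∧
      ∀ u : Fin n, (lam - 3) * (lam - 1) * v u = v ⟨0, by omega⟩ * pat lam u) := by
  by_cases hl1 : lam = 1
  · exact Or.inl hl1
  right
  set z0 : Fin n := ⟨0, by omega⟩ with hz0
  set z1 : Fin n := ⟨1, by omega⟩ with hz1
  set z2 : Fin n := ⟨2, by omega⟩ with hz2
  have heq : ∀ j, (starPlus n).degree j * v j + ∑ u ∈ (starPlus n).neighborFinset j, v u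
      = lam * v j := by
    intro j
    rw [← sLap_mulVec, heig, Pi.smul_apply, smul_eq_mul]
  -- pendant equations
  have hp : ∀ u : Fin n, 3 ≤ u.val → (lam - 1) * v u = v z0 := by
    intro u hu
    have h := heq u
    rw [degree_pendant u hu, nbhd_pendant u hu (by omega), Finset.sum_singleton] at h
    push_cast at h
    linarith [h]
  -- vertex 1 and 2 equations
  have h1 : 2 * v z1 + (v z0 + v z2) = lam * v z1 := by
    have h := heq z1
    rw [degree_one hn z1 rfl, nbhd_one hn z1 rfl] at h
    rw [Finset.sum_insert (by simp [Fin.ext_iff]), Finset.sum_singleton] at h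
    push_cast at h
    linarith [h]
  have h2 : 2 * v z2 + (v z0 + v z1) = lam * v z2 := by
    have h := heq z2
    rw [degree_two hn z2 rfl, nbhd_two hn z2 rfl] at h
    rw [Finset.sum_insert (by simp [Fin.ext_iff]), Finset.sum_singleton] at h
    push_cast at h
    linarith [h]
  -- vertex 0 equation
  have h0 : ((n : ℝ) - 1) * v z0 + (∑ u, v u - v z0) = lam * v z0 := by
    have h := heq z0
    rw [degree_zero z0 rfl, nbhd_zero z0 rfl] at h
    rw [Finset.sum_erase_eq_sub (Finset.mem_univ z0)] at h
    have hcast : (((n - 1 : ℕ)) : ℝ) = (n : ℝ) - 1 := by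
      have : (1 : ℕ) ≤ n := by omega
      push_cast [this]
      ring
    rw [hcast] at h
    linarith [h]
  -- v z1 = v z2
  have h12 : v z1 = v z2 := by
    have : (lam - 1) * (v z1 - v z2) = 0 := by linarith
    rcases mul_eq_zero.mp this with h | h
    · exact absurd (by linarith) hl1
    · linarith
  -- (lam - 3) * v z1 = v z0
  have hb : (lam - 3) * v z1 = v z0 := by rw [h12] at h1 ⊢; linarith
  -- pendant sum
  set S := ∑ u ∈ Finset.univ.filter (fun i : Fin n => 3 ≤ i.val), v u with hS
  have hSsum : (lam - 1) * S = ((n : ℝ) - 3) * v z0 := by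
    rw [hS, Finset.mul_sum]
    rw [Finset.sum_congr rfl (fun u hu => hp u (Finset.mem_filter.mp hu).2)]
    rw [Finset.sum_const, card_pendants hn, nsmul_eq_mul]
    have : ((n - 3 : ℕ) : ℝ) = (n : ℝ) - 3 := by
      have : (3 : ℕ) ≤ n := by omega
      push_cast [this]; ring
    rw [this]
  -- main equation at vertex 0 rewritten
  have h0' : ((n : ℝ) - 1 - lam) * v z0 + 2 * v z1 + S = 0 := by
    have hsplit := sum_univ_split hn v
    rw [hsplit] at h0
    rw [h12] at h0 ⊢
    linarith
  -- v z0 ≠ 0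
  have hv0 : v z0 ≠ 0 := by
    intro hv0
    apply hv
    have hb' : v z1 = 0 := by
      rcases mul_eq_zero.mp (hb.trans hv0) with h | h
      · -- lam = 3 : then from h0' : 2 v z1 + S = 0 and S = 0
        have hS0 : S = 0 := by
          have := hSsum
          rw [hv0] at this
          have h2' : (lam - 1) * S = 0 := by linarith
          rcases mul_eq_zero.mp h2' with h' | h'
          · exact absurd (by linarith) hl1
          · exact h'
        rw [hv0, hS0] at h0'
        linarith
      · exact h
    have hpend : ∀ u : Fin n, 3 ≤ u.val → v u = 0 := by
      intro u hu
      have := hp u hu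
      rw [hv0] at this
      rcases mul_eq_zero.mp this with h | h
      · exact absurd (by linarith) hl1
      · exact h
    funext u
    rcases lt_or_ge u.val 3 with h | h
    · interval_cases hu : u.val
      · have : u = z0 := Fin.ext hu; rw [this, hv0]; rfl
      · have : u = z1 := Fin.ext hu; rw [this, hb']; rfl
      · have : u = z2 := Fin.ext hu; rw [this, ← h12, hb']; rfl
    · rw [hpend u h]; rfl
  -- the cubic
  have hg : gcube n lam = 0 := by
    have key : (((n:ℝ) - 1 - lam) * ((lam - 3)*(lam - 1)) + 2 * (lam - 1) + ((n:ℝ) - 3) * (lam - 3)) * v z0 = 0 := by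
      have e1 : (lam - 3) * (lam - 1) * (((n : ℝ) - 1 - lam) * v z0 + 2 * v z1 + S) = 0 := by
        rw [h0']; ring
      calc (((n:ℝ) - 1 - lam) * ((lam - 3)*(lam - 1)) + 2 * (lam - 1) + ((n:ℝ) - 3) * (lam - 3)) * v z0
          = (lam - 3) * (lam - 1) * (((n : ℝ) - 1 - lam) * v z0) +
            2 * (lam - 1) * ((lam - 3) * v z1) + (lam - 3) * (((n:ℝ) - 3) * v z0) := by
            rw [hb]; ring
        _ = (lam - 3) * (lam - 1) * (((n : ℝ) - 1 - lam) * v z0) +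
            2 * (lam - 1) * ((lam - 3) * v z1) + (lam - 3) * ((lam - 1) * S) := by rw [hSsum]
        _ = (lam - 3) * (lam - 1) * (((n : ℝ) - 1 - lam) * v z0 + 2 * v z1 + S) := by ring
        _ = 0 := e1
    have hbr : ((n:ℝ) - 1 - lam) * ((lam - 3)*(lam - 1)) + 2 * (lam - 1) + ((n:ℝ) - 3) * (lam - 3) = 0 := by
      rcases mul_eq_zero.mp key with h | h
      · exact h
      · exact absurd h hv0
    rw [gcube]
    linear_combination hbr
  have hl3 : lam ≠ 3 := by
    intro h
    rw [h, gcube] at hg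
    linarith
  refine ⟨hg, hl1, hl3, hv0, ?_⟩
  intro u
  rcases lt_or_ge u.val 3 with h | h
  · interval_cases hu : u.val
    · have he : u = z0 := Fin.ext hu
      rw [pat, if_pos hu, he]
      ring
    · have he : u = z1 := Fin.ext hu
      rw [pat, if_neg (by omega), if_pos (by omega), he]
      calc (lam - 3) * (lam - 1) * v z1 = (lam - 1) * ((lam - 3) * v z1) := by ring
        _ = (lam - 1) * v z0 := by rw [hb]
        _ = v z0 * (lam - 1) := by ring
    · have he : u = z2 := Fin.ext hu
      rw [pat, if_neg (by omega), if_pos (by omega), he, ← h12]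
      calc (lam - 3) * (lam - 1) * v z1 = (lam - 1) * ((lam - 3) * v z1) := by ring
        _ = (lam - 1) * v z0 := by rw [hb]
        _ = v z0 * (lam - 1) := by ring
  · rw [pat, if_neg (by omega), if_neg (by omega)]
    calc (lam - 3) * (lam - 1) * v u = (lam - 3) * ((lam - 1) * v u) := by ring
      _ = (lam - 3) * v z0 := by rw [hp u h]
      _ = v z0 * (lam - 3) := by ring

end StarPlusAux

namespace StarPlusAux
variable {n : ℕ}

noncomputable def gpoly (n : ℕ) : Polynomial ℝ :=
  Polynomial.C (-1 : ℝ) * Polynomial.X ^ 3 + Polynomial.C ((n : ℝ) + 3) * Polynomial.X ^ 2 +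
    Polynomial.C (-(3 * (n : ℝ))) * Polynomial.X + Polynomial.C 4

lemma gpoly_eval (x : ℝ) : (gpoly n).eval x = gcube n x := by
  simp [gpoly, gcube]; ring

lemma gpoly_natDegree : (gpoly n).natDegree = 3 := by
  unfold gpoly
  compute_degree!

lemma gpoly_ne_zero : gpoly n ≠ 0 := by
  intro h
  have := gpoly_natDegree (n := n)
  rw [h] at this
  simp at this

lemma gcube_continuous : Continuous (gcube n) := by
  have : gcube n = fun x => (gpoly n).eval x := by funext x; rw [gpoly_eval]
  rw [this]
  exact (gpoly n).continuous_aeval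

lemma gcube_pos_root (x : ℝ) (hx : gcube n x = 0) : 0 < x := by
  by_contra h
  push_neg at h
  have h1 : x^3 ≤ 0 := by nlinarith [mul_nonneg (neg_nonneg.mpr h) (sq_nonneg x)]
  have h2 : 0 ≤ ((n:ℝ) + 3) * x^2 := by positivity
  have h3 : 0 ≤ -(3 * (n:ℝ) * x) := by
    have : (0:ℝ) ≤ (n:ℝ) := Nat.cast_nonneg n
    nlinarith
  rw [gcube] at hx
  nlinarith

lemma exists_mid_root (hn : 4 ≤ n) : ∃ r ∈ Set.Ioo (1:ℝ) 3, gcube n r = 0 := by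
  have h1 : gcube n 1 < 0 := by
    rw [gcube]
    have : (4:ℝ) ≤ (n:ℝ) := by exact_mod_cast hn
    nlinarith
  have h3 : (0:ℝ) < gcube n 3 := by
    rw [gcube]; ring_nf
    norm_num
  have := intermediate_value_Ioo (le_of_lt (by norm_num : (1:ℝ) < 3))
    (gcube_continuous (n := n)).continuousOn
  have hmem : (0:ℝ) ∈ Set.Ioo (gcube n 1) (gcube n 3) := ⟨h1, h3⟩
  obtain ⟨r, hr, hr0⟩ := this hmem
  exact ⟨r, hr, hr0⟩

lemma exists_big_root (hn : 4 ≤ n) : ∃ r ∈ Set.Ioo (3:ℝ) ((n:ℝ)+3), gcube n r = 0 := by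
  have hN : (4:ℝ) ≤ (n:ℝ) := by exact_mod_cast hn
  have h3 : (0:ℝ) < gcube n 3 := by rw [gcube]; ring_nf; norm_num
  have hb : gcube n ((n:ℝ)+3) < 0 := by
    rw [gcube]
    nlinarith
  have := intermediate_value_Ioo' (le_of_lt (by linarith : (3:ℝ) < (n:ℝ)+3))
    (gcube_continuous (n := n)).continuousOn
  have hmem : (0:ℝ) ∈ Set.Ioo (gcube n ((n:ℝ)+3)) (gcube n 3) := ⟨hb, h3⟩
  obtain ⟨r, hr, hr0⟩ := this hmem
  exact ⟨r, hr, hr0⟩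

lemma unique_small_root (hn : 4 ≤ n) (a b : ℝ) (ha : gcube n a = 0) (hb : gcube n b = 0)
    (ha1 : a < 1) (hb1 : b < 1) : a = b := by
  by_contra hne
  obtain ⟨r2, hr2mem, hr2⟩ := exists_mid_root hn
  obtain ⟨r1, hr1mem, hr1⟩ := exists_big_root hn
  obtain ⟨hr2a, hr2b⟩ := hr2mem
  obtain ⟨hr1a, hr1b⟩ := hr1mem
  have hroots : ∀ x : ℝ, gcube n x = 0 → x ∈ (gpoly n).roots := by
    intro x hx
    rw [Polynomial.mem_roots (gpoly_ne_zero), Polynomial.IsRoot, gpoly_eval]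
    exact hx
  have hsub : ({a, b, r2, r1} : Finset ℝ) ⊆ (gpoly n).roots.toFinset := by
    intro x hx
    rw [Multiset.mem_toFinset]
    simp only [Finset.mem_insert, Finset.mem_singleton] at hx
    rcases hx with rfl | rfl | rfl | rfl
    · exact hroots _ ha
    · exact hroots _ hb
    · exact hroots _ hr2
    · exact hroots _ hr1
  have m1 : a ∉ ({b, r2, r1} : Finset ℝ) := by
    simp only [Finset.mem_insert, Finset.mem_singleton]
    push_neg
    exact ⟨hne, by linarith, by linarith⟩
  have m2 : b ∉ ({r2, r1} : Finset ℝ) := by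
    simp only [Finset.mem_insert, Finset.mem_singleton]
    push_neg
    exact ⟨by linarith, by linarith⟩
  have m3 : r2 ∉ ({r1} : Finset ℝ) := by
    simp only [Finset.mem_singleton]
    intro h; linarith
  have hcard4 : ({a, b, r2, r1} : Finset ℝ).card = 4 := by
    rw [Finset.card_insert_of_notMem m1, Finset.card_insert_of_notMem m2,
      Finset.card_insert_of_notMem m3, Finset.card_singleton]
  have hle : ({a, b, r2, r1} : Finset ℝ).card ≤ (gpoly n).roots.toFinset.card :=
    Finset.card_le_card hsub
  have h1 : (gpoly n).roots.toFinset.card ≤ Multiset.card (gpoly n).roots :=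
    Multiset.toFinset_card_le _
  have h2 : Multiset.card (gpoly n).roots ≤ (gpoly n).natDegree := (gpoly n).card_roots'
  rw [gpoly_natDegree] at h2
  omega

lemma trace_eq_sum_eigs {m : ℕ} {A : Matrix (Fin m) (Fin m) ℝ} (hA : A.IsHermitian) :
    ∑ i, hA.eigenvalues i = A.trace := by
  rw [hA.trace_eq_sum_eigenvalues]
  simp

end StarPlusAux

namespace StarPlusAux
variable {n : ℕ}

lemma eigenvalue_lt_one_unique (hn : 4 ≤ n)
    (hA : (sLapMatrix (starPlus n)).IsHermitian) (i j : Fin n)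
    (hi : hA.eigenvalues i < 1) (hj : hA.eigenvalues j < 1) : i = j := by
  by_contra hij
  set vi : Fin n → ℝ := ⇑(hA.eigenvectorBasis i) with hvi
  set vj : Fin n → ℝ := ⇑(hA.eigenvectorBasis j) with hvj
  have hinz : vi ≠ 0 := by
    intro h
    have h0 : hA.eigenvectorBasis i = 0 := by
      ext u
      exact congrFun h u
    have := hA.eigenvectorBasis.orthonormal.1 i
    rw [h0, norm_zero] at this
    norm_num at this
  have hjnz : vj ≠ 0 := by
    intro h
    have h0 : hA.eigenvectorBasis j = 0 := by
      ext u
      exact congrFun h u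
    have := hA.eigenvectorBasis.orthonormal.1 j
    rw [h0, norm_zero] at this
    norm_num at this
  have heigi := hA.mulVec_eigenvectorBasis i
  have heigj := hA.mulVec_eigenvectorBasis j
  have hmi := eig_main hn (hA.eigenvalues i) vi hinz heigi
  have hmj := eig_main hn (hA.eigenvalues j) vj hjnz heigj
  rcases hmi with h | ⟨hgi, hi1, hi3, hi0, hpati⟩
  · linarith [hi, h.le]
  rcases hmj with h | ⟨hgj, hj1, hj3, hj0, hpatj⟩
  · linarith [hj, h.le]
  have hlameq : hA.eigenvalues i = hA.eigenvalues j :=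
    unique_small_root hn _ _ hgi hgj hi hj
  set lam := hA.eigenvalues i with hlam
  rw [← hlameq] at hpatj hj1 hj3
  set z0 : Fin n := ⟨0, by omega⟩ with hz0
  -- proportionality: vj z0 * vi u = vi z0 * vj u for all u
  have hprop : ∀ u : Fin n, vj z0 * vi u = vi z0 * vj u := by
    intro u
    have hc : (lam - 3) * (lam - 1) ≠ 0 :=
      mul_ne_zero (sub_ne_zero.mpr hi3) (sub_ne_zero.mpr hi1)
    have e1 := hpati u
    have e2 := hpatj u
    have : (lam - 3) * (lam - 1) * (vj z0 * vi u) = (lam - 3) * (lam - 1) * (vi z0 * vj u) := by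
      calc (lam - 3) * (lam - 1) * (vj z0 * vi u)
          = vj z0 * ((lam - 3) * (lam - 1) * vi u) := by ring
        _ = vj z0 * (vi z0 * pat lam u) := by rw [e1]
        _ = vi z0 * (vj z0 * pat lam u) := by ring
        _ = vi z0 * ((lam - 3) * (lam - 1) * vj u) := by rw [e2]
        _ = (lam - 3) * (lam - 1) * (vi z0 * vj u) := by ring
    exact mul_left_cancel₀ hc this
  -- orthogonality
  have horth : ∑ u, vi u * vj u = 0 := by
    have h2 : (inner ℝ (hA.eigenvectorBasis i) (hA.eigenvectorBasis j) : ℝ) = 0 :=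
      hA.eigenvectorBasis.orthonormal.2 hij
    rw [PiLp.inner_apply] at h2
    simpa [RCLike.inner_apply, mul_comm] using h2
  have hsum : vj z0 * (∑ u, vi u * vi u) = 0 := by
    rw [Finset.mul_sum]
    have e1 : ∀ u : Fin n, vj z0 * (vi u * vi u) = vi z0 * (vi u * vj u) := by
      intro u
      calc vj z0 * (vi u * vi u) = vi u * (vj z0 * vi u) := by ring
        _ = vi u * (vi z0 * vj u) := by rw [hprop u]
        _ = vi z0 * (vi u * vj u) := by ring
    rw [Finset.sum_congr rfl (fun u _ => e1 u), ← Finset.mul_sum, horth, mul_zero]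
  have hpos : 0 < ∑ u, vi u * vi u := by
    obtain ⟨u0, hu0⟩ := Function.ne_iff.mp hinz
    apply Finset.sum_pos'
    · intro u _
      exact mul_self_nonneg _
    · exact ⟨u0, Finset.mem_univ u0, mul_self_pos.mpr hu0⟩
  rcases mul_eq_zero.mp hsum with h | h
  · exact hj0 h
  · linarith

end StarPlusAux

namespace StarPlusAux
variable {n : ℕ}

lemma card_filter_lt (k : ℕ) (hk : k ≤ n) :
    (Finset.univ.filter (fun i : Fin n => i.val < k)).card = k := by
  rcases eq_or_lt_of_le hk with rfl | hlt
  · rw [Finset.filter_true_of_mem (fun i _ => i.isLt), Finset.card_univ, Fintype.card_fin]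
  · have : Finset.univ.filter (fun i : Fin n => i.val < k) = Finset.Iio (⟨k, hlt⟩ : Fin n) := by
      ext i
      simp [Finset.mem_Iio, Fin.lt_def]
    rw [this, Fin.card_Iio]

lemma card_filter_ge (k : ℕ) (hk : k ≤ n) :
    (Finset.univ.filter (fun i : Fin n => ¬ i.val < k)).card = n - k := by
  have h := Finset.card_filter_add_card_filter_not (s := (Finset.univ : Finset (Fin n)))
    (p := fun i : Fin n => i.val < k)
  rw [Finset.card_univ, Fintype.card_fin, card_filter_lt k hk] at h
  omega

end StarPlusAux

namespace StarPlusAux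
variable {n : ℕ}

lemma basis_ne_zero {m : ℕ} {A : Matrix (Fin m) (Fin m) ℝ} (hA : A.IsHermitian) (i : Fin m) :
    ⇑(hA.eigenvectorBasis i) ≠ (0 : Fin m → ℝ) := by
  intro h
  have h0 : hA.eigenvectorBasis i = 0 := by
    ext u
    exact congrFun h u
  have := hA.eigenvectorBasis.orthonormal.1 i
  rw [h0, norm_zero] at this
  norm_num at this

lemma eigenvalues_pos (hn : 4 ≤ n) (hA : (sLapMatrix (starPlus n)).IsHermitian) (i : Fin n) :
    0 < hA.eigenvalues i := by
  rcases eig_main hn (hA.eigenvalues i) _ (basis_ne_zero hA i)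
    (hA.mulVec_eigenvectorBasis i) with h | ⟨hg, _⟩
  · rw [h]; norm_num
  · exact gcube_pos_root _ hg

lemma trace_sLap (hn : 4 ≤ n) : (sLapMatrix (starPlus n)).trace = 2 * (n : ℝ) := by
  have hdiag : ∀ v : Fin n, sLapMatrix (starPlus n) v v = ((starPlus n).degree v : ℝ) := by
    intro v
    rw [sLapMatrix, Matrix.add_apply, SimpleGraph.degMatrix, Matrix.diagonal_apply_eq]
    simp
  rw [Matrix.trace]
  simp only [Matrix.diag_apply]
  rw [Finset.sum_congr rfl (fun v _ => hdiag v)]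
  rw [← Nat.cast_sum]
  rw [sum_degrees hn]
  push_cast
  ring

lemma dtail_one (hn : 4 ≤ n) (d : Fin n → ℕ) (danti : Antitone d) (σd : Equiv.Perm (Fin n))
    (hσd : ∀ i, d i = (starPlus n).degree (σd i)) (i : Fin n) (hi : 3 ≤ i.val) : d i = 1 := by
  have hge : 1 ≤ d i := by rw [hσd]; exact degree_pos hn _
  by_contra hne
  have h2 : 2 ≤ d i := by omega
  set z0 : Fin n := ⟨0, by omega⟩
  set z1 : Fin n := ⟨1, by omega⟩
  set z2 : Fin n := ⟨2, by omega⟩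
  have hmem : ∀ x : Fin n, x ≤ i → σd x ∈ ({z0, z1, z2} : Finset (Fin n)) := by
    intro x hx
    have hdx : 2 ≤ d x := le_trans h2 (danti hx)
    rw [hσd] at hdx
    have := degree_le_one_of_ge hn _ hdx
    simp only [z0, z1, z2, Finset.mem_insert, Finset.mem_singleton, Fin.ext_iff, Fin.val_mk]
    omega
  have hsub : ({z0, z1, z2, i} : Finset (Fin n)).image σd ⊆ ({z0, z1, z2} : Finset (Fin n)) := by
    intro y hy
    rw [Finset.mem_image] at hy
    obtain ⟨x, hx, rfl⟩ := hy
    simp only [Finset.mem_insert, Finset.mem_singleton] at hx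
    apply hmem
    have hle : ∀ y : Fin n, y.val ≤ i.val → y ≤ i := fun y h => Fin.le_def.mpr h
    rcases hx with rfl | rfl | rfl | rfl
    · exact hle _ (by show 0 ≤ i.val; omega)
    · exact hle _ (by show 1 ≤ i.val; omega)
    · exact hle _ (by show 2 ≤ i.val; omega)
    · exact le_refl _
  have hc4 : ({z0, z1, z2, i} : Finset (Fin n)).card = 4 := by
    have m1 : z0 ∉ ({z1, z2, i} : Finset (Fin n)) := by
      simp only [z0, z1, z2, Finset.mem_insert, Finset.mem_singleton, Fin.ext_iff, Fin.val_mk]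
      omega
    have m2 : z1 ∉ ({z2, i} : Finset (Fin n)) := by
      simp only [z0, z1, z2, Finset.mem_insert, Finset.mem_singleton, Fin.ext_iff, Fin.val_mk]
      omega
    have m3 : z2 ∉ ({i} : Finset (Fin n)) := by
      simp only [z2, Finset.mem_singleton, Fin.ext_iff, Fin.val_mk]
      omega
    rw [Finset.card_insert_of_notMem m1, Finset.card_insert_of_notMem m2,
      Finset.card_insert_of_notMem m3, Finset.card_singleton]
  have hc3 : ({z0, z1, z2} : Finset (Fin n)).card ≤ 3 := by
    apply le_trans (Finset.card_insert_le _ _)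
    have := Finset.card_insert_le z1 ({z2} : Finset (Fin n))
    simp only [Finset.card_singleton] at this ⊢
    omega
  have := Finset.card_le_card hsub
  rw [Finset.card_image_of_injective _ σd.injective, hc4] at this
  omega

end StarPlusAux

open StarPlusAux in
theorem starPlus_sum_k_largest_lt {n : ℕ} (hn : 4 ≤ n) (k : ℕ) (hk3 : 3 ≤ k) (hkn : k ≤ n)
    (q : Fin n → ℝ) (hq : IsEigSeq (sLapMatrix (starPlus n)) q)
    (d : Fin n → ℕ) (hd : IsDegSeq (starPlus n) d) :
    ∑ i ∈ Finset.univ.filter (fun i : Fin n => i.val < k), q i <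
      1 + ∑ i ∈ Finset.univ.filter (fun i : Fin n => i.val < k), (d i : ℝ) := by
  obtain ⟨qanti, hA, σ, hσ⟩ := hq
  obtain ⟨danti, σd, hσd⟩ := hd
  -- eigenvalue facts
  have hqpos : ∀ i, 0 < q i := by
    intro i
    rw [hσ i]
    exact eigenvalues_pos hn hA (σ i)
  have hq1 : ∀ i j, q i < 1 → q j < 1 → i = j := by
    intro i j hi hj
    rw [hσ i] at hi
    rw [hσ j] at hj
    exact σ.injective (eigenvalue_lt_one_unique hn hA (σ i) (σ j) hi hj)
  have hqsum : ∑ i, q i = 2 * (n : ℝ) := by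
    rw [Finset.sum_congr rfl (fun i _ => hσ i), Equiv.sum_comp σ hA.eigenvalues,
      trace_eq_sum_eigs hA, trace_sLap hn]
  -- degree sequence facts
  have hd1 : ∀ i : Fin n, 3 ≤ i.val → d i = 1 := dtail_one hn d danti σd hσd
  have hdsum : ∑ i, (d i : ℝ) = 2 * (n : ℝ) := by
    have step1 : ∑ i, (d i : ℝ) = ∑ i, (((starPlus n).degree (σd i) : ℕ) : ℝ) :=
      Finset.sum_congr rfl (fun i _ => by rw [hσd i])
    rw [step1, Equiv.sum_comp σd (fun v => (((starPlus n).degree v : ℕ) : ℝ)), ← Nat.cast_sum,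
      sum_degrees hn]
    push_cast; ring
  -- split sums
  have hqsplit := Finset.sum_filter_add_sum_filter_not (Finset.univ : Finset (Fin n))
    (fun i : Fin n => i.val < k) q
  have hdsplit := Finset.sum_filter_add_sum_filter_not (Finset.univ : Finset (Fin n))
    (fun i : Fin n => i.val < k) (fun i => (d i : ℝ))
  set F := Finset.univ.filter (fun i : Fin n => ¬ i.val < k) with hF
  have hcardF : F.card = n - k := card_filter_ge k hkn
  have hcastnk : ((n - k : ℕ) : ℝ) = (n : ℝ) - (k : ℝ) := by
    push_cast [hkn]; ring
  -- tail of d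
  have hdtail : ∑ i ∈ F, (d i : ℝ) = (n : ℝ) - (k : ℝ) := by
    have : ∀ i ∈ F, (d i : ℝ) = 1 := by
      intro i hi
      rw [hF, Finset.mem_filter] at hi
      rw [hd1 i (by omega)]
      norm_num
    rw [Finset.sum_congr rfl this, Finset.sum_const, hcardF, nsmul_eq_mul, mul_one, hcastnk]
  -- tail of q
  have hqtail : (n : ℝ) - (k : ℝ) - 1 < ∑ i ∈ F, q i := by
    by_cases hex : ∃ i ∈ F, q i < 1
    · obtain ⟨i0, hi0F, hi0⟩ := hex
      have hrest : ∀ j ∈ F.erase i0, (1:ℝ) ≤ q j := by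
        intro j hj
        obtain ⟨hne, hjF⟩ := Finset.mem_erase.mp hj
        by_contra h
        push_neg at h
        exact hne (hq1 j i0 h hi0)
      have hsum_erase : ((F.erase i0).card : ℝ) * 1 ≤ ∑ j ∈ F.erase i0, q j := by
        have := Finset.card_nsmul_le_sum (F.erase i0) q 1 hrest
        rwa [nsmul_eq_mul] at this
      have hcard_erase : (F.erase i0).card = n - k - 1 := by
        rw [Finset.card_erase_of_mem hi0F, hcardF]
      have hFpos : 1 ≤ F.card := Finset.card_pos.mpr ⟨i0, hi0F⟩
      have hcast2 : ((n - k - 1 : ℕ) : ℝ) = (n : ℝ) - (k : ℝ) - 1 := by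
        have h1 : k + 1 ≤ n := by omega
        push_cast [Nat.sub_sub, h1]
        ring
      rw [← Finset.add_sum_erase F q hi0F]
      rw [hcard_erase, hcast2] at hsum_erase
      have := hqpos i0
      linarith
    · push_neg at hex
      have hsum_ge : ((F.card : ℝ)) * 1 ≤ ∑ j ∈ F, q j := by
        have := Finset.card_nsmul_le_sum F q 1 hex
        rwa [nsmul_eq_mul] at this
      rw [hcardF, hcastnk] at hsum_ge
      linarith
  -- finish
  have e1 : ∑ i ∈ Finset.univ.filter (fun i : Fin n => i.val < k), q i
      = 2 * (n : ℝ) - ∑ i ∈ F, q i := by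
    rw [← hqsum, ← hqsplit]
    ring
  have e2 : ∑ i ∈ Finset.univ.filter (fun i : Fin n => i.val < k), (d i : ℝ)
      = 2 * (n : ℝ) - ((n : ℝ) - (k : ℝ)) := by
    rw [← hdsum, ← hdsplit, hdtail]
    ring
  rw [e1, e2]
  linarith
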